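/- arXiv:2009.01993 — 3 statements merged into one kernel-verified Lean document; each statement's English description precedes it below -/
import Mathlib

section
/- Let 0 < q ≤ 1, let R ≥ 1, let z ∈ ℝ^R have nonnegative entries and let η ∈ ℝ^R have strictly positive entries. Then the ℓ_q quasi-norm of z is bounded by the variational objective: (∑_{r=1}^R z_r^q)^{1/q} ≤ (1/2)·∑_{r=1}^R z_r²/η_r + (1/2)·(∑_{r=1}^R η_r^{q/(2-q)})^{(2-q)/q}. -/
open Finset

/-- Variational upper bound for the ℓ_q quasi-norm: for `0 < q ≤ 1`, nonnegative `z`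
and positive `η`,
`(∑ z r ^ q)^(1/q) ≤ (1/2) ∑ z r ^ 2 / η r + (1/2) (∑ η r ^ (q/(2-q)))^((2-q)/q)`. -/
theorem lq_variational_upper_bound
    (q : ℝ) (hq0 : 0 < q) (hq1 : q ≤ 1)
    (R : ℕ) (hR : 1 ≤ R)
    (z : Fin R → ℝ) (hz : ∀ r, 0 ≤ z r)
    (η : Fin R → ℝ) (hη : ∀ r, 0 < η r) :
    (∑ r, z r ^ q) ^ (1 / q) ≤
      (1 / 2) * ∑ r, (z r) ^ 2 / η r
        + (1 / 2) * (∑ r, η r ^ (q / (2 - q))) ^ ((2 - q) / q) := by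
  have h2q : 0 < 2 - q := by linarith
  set A : ℝ := ∑ r, (z r) ^ 2 / η r with hA
  set B : ℝ := ∑ r, η r ^ (q / (2 - q)) with hB
  have hAnn : 0 ≤ A := Finset.sum_nonneg fun r _ => div_nonneg (sq_nonneg _) (hη r).le
  have hBnn : 0 ≤ B := Finset.sum_nonneg fun r _ => Real.rpow_nonneg (hη r).le _
  have hpq : Real.HolderConjugate (2 / q) (2 / (2 - q)) := by
    rw [Real.holderConjugate_iff]
    constructor
    · rw [lt_div_iff₀ hq0]; linarith
    · field_simp; ring
  set f : Fin R → ℝ := fun r => (z r ^ 2 / η r) ^ (q / 2) with hf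
  set g : Fin R → ℝ := fun r => (η r ^ (q / (2 - q))) ^ ((2 - q) / 2) with hg
  have hfnn : ∀ r, (0:ℝ) ≤ f r := fun r =>
    Real.rpow_nonneg (div_nonneg (sq_nonneg _) (hη r).le) _
  have hgnn : ∀ r, (0:ℝ) ≤ g r := fun r =>
    Real.rpow_nonneg (Real.rpow_nonneg (hη r).le _) _
  have hfg : ∀ r, f r * g r = z r ^ q := by
    intro r
    have hηp := hη r
    have h1 : g r = η r ^ (q / 2) := by
      simp only [hg, ← Real.rpow_mul hηp.le]
      congr 1
      field_simp
    have h2 : f r = z r ^ q / η r ^ (q / 2) := by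
      simp only [hf, Real.div_rpow (sq_nonneg (z r)) hηp.le]
      congr 1
      rw [← Real.rpow_natCast (z r) 2, ← Real.rpow_mul (hz r)]
      push_cast; rw [show (2:ℝ) * (q / 2) = q by ring]
    rw [h1, h2, div_mul_cancel₀]
    exact (Real.rpow_pos_of_pos hηp _).ne'
  have hfp : ∀ r, f r ^ (2 / q) = z r ^ 2 / η r := by
    intro r
    simp only [hf, ← Real.rpow_mul (div_nonneg (sq_nonneg (z r)) (hη r).le)]
    rw [show q / 2 * (2 / q) = (1:ℝ) by field_simp, Real.rpow_one]
  have hgp : ∀ r, g r ^ (2 / (2 - q)) = η r ^ (q / (2 - q)) := by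
    intro r
    simp only [hg, ← Real.rpow_mul (Real.rpow_nonneg (hη r).le _)]
    rw [show (2 - q) / 2 * (2 / (2 - q)) = (1:ℝ) by field_simp, Real.rpow_one]
  have hH : ∑ r, z r ^ q ≤ A ^ (q / 2) * B ^ ((2 - q) / 2) := by
    have h := Real.inner_le_Lp_mul_Lq_of_nonneg Finset.univ hpq
      (fun r _ => hfnn r) (fun r _ => hgnn r)
    simp only [hfg, hfp, hgp] at h
    rw [one_div_div, one_div_div] at h
    exact h
  have hmain : (∑ r, z r ^ q) ^ (1 / q) ≤
      A ^ ((1:ℝ)/2) * (B ^ ((2 - q) / q)) ^ ((1:ℝ)/2) := by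
    have h1 : (∑ r, z r ^ q) ^ (1 / q) ≤ (A ^ (q/2) * B ^ ((2-q)/2)) ^ (1/q) :=
      Real.rpow_le_rpow (Finset.sum_nonneg fun r _ => Real.rpow_nonneg (hz r) _) hH
        (by positivity)
    refine h1.trans_eq ?_
    rw [Real.mul_rpow (Real.rpow_nonneg hAnn _) (Real.rpow_nonneg hBnn _),
        ← Real.rpow_mul hAnn, ← Real.rpow_mul hBnn, ← Real.rpow_mul hBnn]
    rw [show q / 2 * (1 / q) = (1:ℝ)/2 by field_simp <;> ring,
        show (2 - q) / 2 * (1 / q) = (2 - q) / q * (1 / 2) by ring]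
  refine hmain.trans ?_
  set y : ℝ := B ^ ((2 - q) / q) with hy
  have hyn : 0 ≤ y := Real.rpow_nonneg hBnn _
  rw [← Real.sqrt_eq_rpow A, ← Real.sqrt_eq_rpow y]
  nlinarith [sq_nonneg (Real.sqrt A - Real.sqrt y), Real.sq_sqrt hAnn, Real.sq_sqrt hyn,
    Real.sqrt_nonneg A, Real.sqrt_nonneg y]
end

section
/- Let 0 < q ≤ 1, let R ≥ 1, and let z ∈ ℝ^R have strictly positive entries. Define η_r = z_r^{2-q} · (∑_{s=1}^R z_s^q)^{(q-1)/q} for each r. Then each η_r > 0 and the variational objective attains the ℓ_q quasi-norm at this η: (1/2)·∑_{r=1}^R z_r²/η_r + (1/2)·(∑_{r=1}^R η_r^{q/(2-q)})^{(2-q)/q} = (∑_{r=1}^R z_r^q)^{1/q}. -/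
open Finset

/-- The variational objective attains the ℓ_q quasi-norm at
`η r = z r ^ (2 - q) * (∑ s, z s ^ q) ^ ((q - 1)/q)`. -/
theorem lq_variational_attained
    (q : ℝ) (hq0 : 0 < q) (hq1 : q ≤ 1)
    (R : ℕ) (hR : 1 ≤ R)
    (z : Fin R → ℝ) (hz : ∀ r, 0 < z r)
    (η : Fin R → ℝ)
    (hη : ∀ r, η r = z r ^ (2 - q) * (∑ s, z s ^ q) ^ ((q - 1) / q)) :
    (∀ r, 0 < η r) ∧
      (1 / 2) * (∑ r, (z r) ^ 2 / η r)
        + (1 / 2) * (∑ r, η r ^ (q / (2 - q))) ^ ((2 - q) / q)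
      = (∑ r, z r ^ q) ^ (1 / q) := by
  have hq2 : (0:ℝ) < 2 - q := by linarith
  have hq2' : (2:ℝ) - q ≠ 0 := ne_of_gt hq2
  have hqne : q ≠ 0 := ne_of_gt hq0
  set S : ℝ := ∑ s, z s ^ q with hSdef
  have hne : (Finset.univ : Finset (Fin R)).Nonempty := by
    have : Nonempty (Fin R) := Fin.pos_iff_nonempty.mp hR
    exact Finset.univ_nonempty
  have hS : 0 < S := Finset.sum_pos (fun s _ => Real.rpow_pos_of_pos (hz s) q) hne
  have hA : 0 < S ^ ((q - 1) / q) := Real.rpow_pos_of_pos hS _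
  have hηpos : ∀ r, 0 < η r := fun r => by
    rw [hη r]; exact mul_pos (Real.rpow_pos_of_pos (hz r) _) hA
  refine ⟨hηpos, ?_⟩
  have h1 : ∑ r, (z r) ^ 2 / η r = S ^ (1 / q) := by
    have key : ∀ r : Fin R, (z r) ^ 2 / η r = z r ^ q * S ^ ((1 - q) / q) := by
      intro r
      have hz2 : (z r) ^ 2 = z r ^ (2:ℝ) := by
        rw [← Real.rpow_natCast (z r) 2]; norm_num
      rw [hη r, hz2, div_mul_eq_div_div, ← Real.rpow_sub (hz r)]
      have e1 : (2:ℝ) - (2 - q) = q := by ring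
      rw [e1, div_eq_mul_inv, ← Real.rpow_neg (le_of_lt hS)]
      have e2 : -((q - 1) / q) = (1 - q) / q := by ring
      rw [e2]
    rw [Finset.sum_congr rfl (fun r _ => key r), ← Finset.sum_mul, ← hSdef]
    nth_rewrite 1 [← Real.rpow_one S]
    rw [← Real.rpow_add hS]
    congr 1
    field_simp
    ring
  have h2 : (∑ r, η r ^ (q / (2 - q))) ^ ((2 - q) / q) = S ^ (1 / q) := by
    have key : ∀ r : Fin R, η r ^ (q / (2 - q)) = z r ^ q * S ^ ((q - 1) / (2 - q)) := by
      intro r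
      rw [hη r, Real.mul_rpow (Real.rpow_nonneg (le_of_lt (hz r)) _) (le_of_lt hA),
        ← Real.rpow_mul (le_of_lt (hz r)), ← Real.rpow_mul (le_of_lt hS)]
      have e1 : (2 - q) * (q / (2 - q)) = q := by field_simp
      have e2 : (q - 1) / q * (q / (2 - q)) = (q - 1) / (2 - q) := by
        field_simp
      rw [e1, e2]
    rw [Finset.sum_congr rfl (fun r _ => key r), ← Finset.sum_mul, ← hSdef]
    nth_rewrite 1 [← Real.rpow_one S]
    rw [← Real.rpow_add hS, ← Real.rpow_mul (le_of_lt hS)]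
    congr 1
    field_simp
    ring
  rw [h1, h2]; ring
end

section
/- Let 0 < q ≤ 1, let R ≥ 1, and let z ∈ ℝ^R have strictly positive entries. Then the ℓ_q quasi-norm (∑_{r=1}^R z_r^q)^{1/q} is the least element of the set of values { (1/2)·∑_{r=1}^R z_r²/η_r + (1/2)·(∑_{r=1}^R η_r^{q/(2-q)})^{(2-q)/q} : η ∈ ℝ^R, η_r > 0 for all r }; that is, it is a lower bound of this set and is attained by some positive η. -/
open Finset

/-- The ℓ_q quasi-norm is the least value of the variational objective over
positive vectors `η`. -/
theorem lq_variational_isLeast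
    (q : ℝ) (hq0 : 0 < q) (hq1 : q ≤ 1)
    (R : ℕ) (hR : 1 ≤ R)
    (z : Fin R → ℝ) (hz : ∀ r, 0 < z r) :
    IsLeast
      { v : ℝ | ∃ η : Fin R → ℝ, (∀ r, 0 < η r) ∧
          v = (1 / 2) * (∑ r, (z r) ^ 2 / η r)
              + (1 / 2) * (∑ r, η r ^ (q / (2 - q))) ^ ((2 - q) / q) }
      ((∑ r, z r ^ q) ^ (1 / q)) := by
  have h2q : (0:ℝ) < 2 - q := by linarith
  have hqne : q ≠ 0 := ne_of_gt hq0
  have h2qne : (2:ℝ) - q ≠ 0 := ne_of_gt h2q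
  have hne : (Finset.univ : Finset (Fin R)).Nonempty := by
    refine Finset.univ_nonempty_iff.2 ?_
    exact Fin.pos_iff_nonempty.1 (by omega)
  set A : ℝ := ∑ r, z r ^ q with hAdef
  have hApos : 0 < A :=
    Finset.sum_pos (fun r _ => Real.rpow_pos_of_pos (hz r) q) hne
  constructor
  · -- membership: choose η r = z r ^ (2-q) * A ^ ((q-1)/q)
    refine ⟨fun r => z r ^ (2 - q) * A ^ ((q - 1) / q),
      fun r => mul_pos (Real.rpow_pos_of_pos (hz r) _) (Real.rpow_pos_of_pos hApos _), ?_⟩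
    have hX : (∑ r, (z r) ^ 2 / (z r ^ (2 - q) * A ^ ((q - 1) / q)))
        = A ^ (1 / q) := by
      have key : ∀ r : Fin R, (z r) ^ 2 / (z r ^ (2 - q) * A ^ ((q - 1) / q))
          = z r ^ q * A ^ ((1 - q) / q) := by
        intro r
        have hz2 : (z r : ℝ) ^ 2 = z r ^ (2:ℝ) := by
          rw [← Real.rpow_natCast (z r) 2]; norm_num
        rw [hz2, div_mul_eq_div_div, ← Real.rpow_sub (hz r)]
        have h1 : (2:ℝ) - (2 - q) = q := by ring
        rw [h1, div_eq_mul_inv, ← Real.rpow_neg hApos.le]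
        congr 2
        ring
      rw [Finset.sum_congr rfl (fun r _ => key r), ← Finset.sum_mul, ← hAdef,
        mul_comm, ← Real.rpow_add_one hApos.ne']
      congr 1
      field_simp
      ring
    have hS : (∑ r, (z r ^ (2 - q) * A ^ ((q - 1) / q)) ^ (q / (2 - q)))
        = A ^ (1 / (2 - q)) := by
      have key : ∀ r : Fin R, (z r ^ (2 - q) * A ^ ((q - 1) / q)) ^ (q / (2 - q))
          = z r ^ q * A ^ ((q - 1) / (2 - q)) := by
        intro r
        rw [Real.mul_rpow (Real.rpow_pos_of_pos (hz r) _).le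
            (Real.rpow_pos_of_pos hApos _).le,
          ← Real.rpow_mul (hz r).le, ← Real.rpow_mul hApos.le]
        congr 2
        · field_simp
        · field_simp
      rw [Finset.sum_congr rfl (fun r _ => key r), ← Finset.sum_mul, ← hAdef,
        mul_comm, ← Real.rpow_add_one hApos.ne']
      congr 1
      field_simp
      ring
    rw [hX, hS, ← Real.rpow_mul hApos.le]
    have h3 : 1 / (2 - q) * ((2 - q) / q) = 1 / q := by field_simp
    rw [h3]
    ring
  · -- lower bound
    rintro v ⟨η, hη, rfl⟩
    set X : ℝ := ∑ r, (z r) ^ 2 / η r with hXdef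
    set S : ℝ := ∑ r, η r ^ (q / (2 - q)) with hSdef
    have hXpos : 0 < X :=
      Finset.sum_pos (fun r _ => div_pos (pow_pos (hz r) 2) (hη r)) hne
    have hSpos : 0 < S :=
      Finset.sum_pos (fun r _ => Real.rpow_pos_of_pos (hη r) _) hne
    set Y : ℝ := S ^ ((2 - q) / q) with hYdef
    have hYpos : 0 < Y := Real.rpow_pos_of_pos hSpos _
    -- Hölder inequality with exponents 2/q and 2/(2-q)
    have hconj : Real.HolderConjugate (2 / q) (2 / (2 - q)) := by
      rw [Real.holderConjugate_iff]; constructor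
      · rw [lt_div_iff₀ hq0]; linarith
      · field_simp; ring
    have holder : A ≤ X ^ (q / 2) * S ^ ((2 - q) / 2) := by
      have h := Real.inner_le_Lp_mul_Lq_of_nonneg (Finset.univ : Finset (Fin R))
        hconj (f := fun r => ((z r) ^ 2 / η r) ^ (q / 2))
        (g := fun r => η r ^ (q / 2))
        (fun r _ => (Real.rpow_pos_of_pos (div_pos (pow_pos (hz r) 2) (hη r)) _).le)
        (fun r _ => (Real.rpow_pos_of_pos (hη r) _).le)
      have e1 : ∀ r : Fin R, ((z r) ^ 2 / η r) ^ (q / 2) * η r ^ (q / 2)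
          = z r ^ q := by
        intro r
        rw [← Real.mul_rpow (div_pos (pow_pos (hz r) 2) (hη r)).le (hη r).le,
          div_mul_cancel₀ _ (ne_of_gt (hη r)), ← Real.rpow_natCast (z r) 2,
          ← Real.rpow_mul (hz r).le]
        congr 1
        ring
      have e2 : ∀ r : Fin R, (((z r) ^ 2 / η r) ^ (q / 2)) ^ (2 / q)
          = (z r) ^ 2 / η r := by
        intro r
        rw [← Real.rpow_mul (div_pos (pow_pos (hz r) 2) (hη r)).le]
        have h5 : q / 2 * (2 / q) = 1 := by field_simp
        rw [h5, Real.rpow_one]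
      have e3 : ∀ r : Fin R, (η r ^ (q / 2)) ^ (2 / (2 - q))
          = η r ^ (q / (2 - q)) := by
        intro r
        rw [← Real.rpow_mul (hη r).le]
        congr 1
        field_simp
      have h12 : 1 / (2 / q) = q / 2 := by field_simp
      have h22 : 1 / (2 / (2 - q)) = (2 - q) / 2 := by field_simp
      calc A = ∑ r, ((z r) ^ 2 / η r) ^ (q / 2) * η r ^ (q / 2) := by
              rw [hAdef]; exact (Finset.sum_congr rfl (fun r _ => (e1 r).symm))
        _ ≤ (∑ r, (((z r) ^ 2 / η r) ^ (q / 2)) ^ (2 / q)) ^ (1 / (2 / q))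
              * (∑ r, (η r ^ (q / 2)) ^ (2 / (2 - q))) ^ (1 / (2 / (2 - q))) := h
        _ = X ^ (q / 2) * S ^ ((2 - q) / 2) := by
              rw [h12, h22]
              congr 1
              · congr 1; exact Finset.sum_congr rfl (fun r _ => e2 r)
              · congr 1; exact Finset.sum_congr rfl (fun r _ => e3 r)
    -- raise to power 1/q
    have key : A ^ (1 / q) ≤ X ^ (1 / 2 : ℝ) * Y ^ (1 / 2 : ℝ) := by
      have h1 : A ^ (1 / q) ≤ (X ^ (q / 2) * S ^ ((2 - q) / 2)) ^ (1 / q) :=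
        Real.rpow_le_rpow hApos.le holder (by positivity)
      have h2 : (X ^ (q / 2) * S ^ ((2 - q) / 2)) ^ (1 / q)
          = X ^ (1 / 2 : ℝ) * Y ^ (1 / 2 : ℝ) := by
        rw [Real.mul_rpow (Real.rpow_pos_of_pos hXpos _).le
            (Real.rpow_pos_of_pos hSpos _).le,
          ← Real.rpow_mul hXpos.le, hYdef, ← Real.rpow_mul hSpos.le,
          ← Real.rpow_mul hSpos.le]
        congr 2
        · field_simp
        · ring
      rw [h2] at h1; exact h1
    -- AM-GM
    have hX2 : (X ^ (1 / 2 : ℝ)) ^ 2 = X := by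
      rw [← Real.rpow_natCast (X ^ (1/2:ℝ)) 2, ← Real.rpow_mul hXpos.le]
      norm_num
    have hY2 : (Y ^ (1 / 2 : ℝ)) ^ 2 = Y := by
      rw [← Real.rpow_natCast (Y ^ (1/2:ℝ)) 2, ← Real.rpow_mul hYpos.le]
      norm_num
    have amgm : X ^ (1 / 2 : ℝ) * Y ^ (1 / 2 : ℝ) ≤ 1 / 2 * X + 1 / 2 * Y := by
      nlinarith [sq_nonneg (X ^ (1/2:ℝ) - Y ^ (1/2:ℝ))]
    calc A ^ (1 / q) ≤ X ^ (1/2:ℝ) * Y ^ (1/2:ℝ) := key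
      _ ≤ 1 / 2 * X + 1 / 2 * Y := amgm
end
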